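/- For every real p ≥ 2, 1/(p − 1) < √π · Γ(p/2 − 1/2) / (2 · Γ(p/2)). -/
import Mathlib

theorem stmt_1 (p : ℝ) (hp : 2 ≤ p) :
    1 / (p - 1) < Real.sqrt Real.pi * Real.Gamma (p / 2 - 1 / 2) / (2 * Real.Gamma (p / 2)) := by
  set x : ℝ := (p - 1) / 2 with hxdef
  have hx : (2:ℝ)⁻¹ ≤ x := by rw [hxdef]; linarith
  have hx0 : 0 < x := by linarith
  have hΓx : 0 < Real.Gamma x := Real.Gamma_pos_of_pos hx0
  have hΓh : 0 < Real.Gamma (x + 1/2) := Real.Gamma_pos_of_pos (by linarith)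
  -- log-convexity midpoint
  have hconv := Real.convexOn_log_Gamma.2 (Set.mem_Ioi.mpr hx0)
    (Set.mem_Ioi.mpr (show (0:ℝ) < x + 1 by linarith))
    (by norm_num : (0:ℝ) ≤ (1/2:ℝ)) (by norm_num : (0:ℝ) ≤ (1/2:ℝ)) (by norm_num)
  simp only [Function.comp_apply, smul_eq_mul] at hconv
  have hmid : (1/2:ℝ) * x + 1/2 * (x + 1) = x + 1/2 := by ring
  rw [hmid] at hconv
  have hsq : Real.Gamma (x + 1/2) ^ 2 ≤ Real.Gamma x * Real.Gamma (x + 1) := by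
    have h1 : Real.log (Real.Gamma (x + 1/2) ^ 2) ≤ Real.log (Real.Gamma x * Real.Gamma (x + 1)) := by
      rw [Real.log_pow, Real.log_mul (ne_of_gt hΓx) (ne_of_gt (Real.Gamma_pos_of_pos (by linarith)))]
      push_cast
      linarith
    exact (Real.log_le_log_iff (by positivity) (by positivity)).mp h1
  rw [Real.Gamma_add_one (ne_of_gt hx0)] at hsq
  have hlt : Real.Gamma (x + 1/2) ^ 2 < (Real.sqrt Real.pi * x * Real.Gamma x) ^ 2 := by
    have hpix : x < Real.pi * x ^ 2 := by
      nlinarith [Real.pi_gt_three]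
    have : (Real.sqrt Real.pi * x * Real.Gamma x) ^ 2 = Real.pi * x ^ 2 * Real.Gamma x ^ 2 := by
      rw [mul_pow, mul_pow, Real.sq_sqrt Real.pi_pos.le]
    rw [this]
    calc Real.Gamma (x + 1/2) ^ 2 ≤ x * Real.Gamma x ^ 2 := by nlinarith
      _ < Real.pi * x ^ 2 * Real.Gamma x ^ 2 :=
        mul_lt_mul_of_pos_right hpix (pow_pos hΓx 2)
  have key : Real.Gamma (x + 1/2) < Real.sqrt Real.pi * x * Real.Gamma x := by
    have hpos : 0 < Real.sqrt Real.pi * x * Real.Gamma x := by positivity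
    nlinarith
  have hp2 : p / 2 - 1/2 = x := by rw [hxdef]; ring
  have hp2' : p / 2 = x + 1/2 := by rw [hxdef]; ring
  rw [hp2, hp2', div_lt_div_iff₀ (by linarith) (by positivity)]
  have hpx : p - 1 = 2 * x := by rw [hxdef]; ring
  rw [hpx]
  nlinarith
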